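/- For integers N ≥ 2 and 0 ≤ k ≤ N-1, with ω = exp(2πi/N), the sum ∑_{n=1}^{N-1} ω^{(k+1)n} / (1 - ω^n)^2 equals 1/12 - (N^2/2)·B₂(k/N), where B₂(x) = x² - x + 1/6 is the second Bernoulli polynomial. -/

import Mathlib

open Complex Finset

section Aux

variable {N : ℕ} {ω : ℂ}

lemma aux_pow_ne_one (hω : IsPrimitiveRoot ω N) {n : ℕ} (h1 : 1 ≤ n) (h2 : n ≤ N - 1) :
    ω ^ n ≠ 1 := by
  intro h
  have hd := (hω.pow_eq_one_iff_dvd n).mp h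
  have := Nat.le_of_dvd (by omega) hd
  omega

lemma aux_geom {z : ℂ} {N : ℕ} (hz1 : z ≠ 1) (hzN : z ^ N = 1) :
    ∑ n ∈ range N, z ^ n = 0 := by
  rw [geom_sum_eq hz1, hzN, sub_self, zero_div]

lemma aux_sum_pow (hω : IsPrimitiveRoot ω N) (hN : 2 ≤ N) {m : ℕ} (hm : ¬ N ∣ m) :
    ∑ n ∈ Icc 1 (N - 1), ω ^ (m * n) = -1 := by
  have hz1 : ω ^ m ≠ 1 := fun h => hm ((hω.pow_eq_one_iff_dvd m).mp h)
  have hzN : (ω ^ m) ^ N = 1 := by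
    rw [← pow_mul, mul_comm, pow_mul, hω.pow_eq_one, one_pow]
  have h0 : ∑ n ∈ range N, (ω ^ m) ^ n = 0 := aux_geom hz1 hzN
  have hins : range N = insert 0 (Icc 1 (N - 1)) := by
    ext x; simp only [Finset.mem_range, Finset.mem_insert, Finset.mem_Icc]; omega
  rw [hins, Finset.sum_insert (by simp)] at h0
  simp only [pow_zero, ← pow_mul] at h0
  linear_combination h0

lemma aux_T0 (hω : IsPrimitiveRoot ω N) (hN : 2 ≤ N) :
    ∑ n ∈ Icc 1 (N - 1), 1 / (1 - ω ^ n) = ((N : ℂ) - 1) / 2 := by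
  have hω0 : ω ≠ 0 := hω.ne_zero (by omega)
  set f : ℕ → ℂ := fun n => 1 / (1 - ω ^ n) with hf
  have hIcc : Icc 1 (N - 1) = Ico 1 N := by
    rw [← Finset.Ico_add_one_right_eq_Icc]; congr 1; omega
  have hrange : ∑ n ∈ Icc 1 (N - 1), f n = ∑ i ∈ range (N - 1), f (1 + i) := by
    rw [hIcc, Finset.sum_Ico_eq_sum_range]
  have hrefl : ∑ i ∈ range (N - 1), f (1 + i) = ∑ i ∈ range (N - 1), f (N - 1 - i) := by
    rw [← Finset.sum_range_reflect]
    apply Finset.sum_congr rfl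
    intro i hi
    simp only [Finset.mem_range] at hi
    congr 1
    omega
  have key : ∀ i ∈ range (N - 1), f (1 + i) + f (N - 1 - i) = 1 := by
    intro i hi
    simp only [Finset.mem_range] at hi
    have h1 : ω ^ (1 + i) ≠ 1 := aux_pow_ne_one hω (by omega) (by omega)
    have hinv : ω ^ (1 + i) * ω ^ (N - 1 - i) = 1 := by
      rw [← pow_add]
      have he : 1 + i + (N - 1 - i) = N := by omega
      rw [he, hω.pow_eq_one]
    have hne1 : (1 : ℂ) - ω ^ (1 + i) ≠ 0 := sub_ne_zero_of_ne (Ne.symm h1)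
    have hne2 : (1 : ℂ) - ω ^ (N - 1 - i) ≠ 0 := by
      intro h
      have h' : ω ^ (N - 1 - i) = 1 := by linear_combination -h
      rw [h', mul_one] at hinv
      exact h1 hinv
    simp only [hf]
    rw [div_add_div _ _ hne1 hne2, div_eq_one_iff_eq (mul_ne_zero hne1 hne2)]
    linear_combination -hinv
  have h2 : (∑ n ∈ Icc 1 (N - 1), f n) + (∑ n ∈ Icc 1 (N - 1), f n) = ((N : ℂ) - 1) := by
    rw [hrange]
    nth_rewrite 2 [hrefl]
    rw [← Finset.sum_add_distrib, Finset.sum_congr rfl key, Finset.sum_const, nsmul_eq_mul,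
      mul_one, Finset.card_range]
    push_cast [Nat.cast_sub (show 1 ≤ N by omega)]
    ring
  have := h2
  linear_combination this / 2

lemma aux_Tstep (hω : IsPrimitiveRoot ω N) (hN : 2 ≤ N) (m : ℕ) :
    ∑ n ∈ Icc 1 (N - 1), ω ^ ((m + 1) * n) / (1 - ω ^ n)
      = (∑ n ∈ Icc 1 (N - 1), ω ^ (m * n) / (1 - ω ^ n))
        - ∑ n ∈ Icc 1 (N - 1), ω ^ (m * n) := by
  rw [← Finset.sum_sub_distrib]
  apply Finset.sum_congr rfl
  intro n hn
  simp only [Finset.mem_Icc] at hn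
  have h1 : (1 : ℂ) - ω ^ n ≠ 0 :=
    sub_ne_zero_of_ne (Ne.symm (aux_pow_ne_one hω hn.1 hn.2))
  have he : (m + 1) * n = m * n + n := by ring
  rw [he, pow_add]
  field_simp
  ring

lemma aux_Tval (hω : IsPrimitiveRoot ω N) (hN : 2 ≤ N) :
    ∀ j, 1 ≤ j → j ≤ N - 1 →
    ∑ n ∈ Icc 1 (N - 1), ω ^ (j * n) / (1 - ω ^ n)
      = (j : ℂ) - 1 - ((N : ℂ) - 1) / 2 := by
  intro j
  induction j with
  | zero => intro h; omega
  | succ j ih =>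
    intro _ hj
    rw [aux_Tstep hω hN j]
    by_cases hj0 : j = 0
    · subst hj0
      simp only [Nat.zero_mul, pow_zero]
      rw [aux_T0 hω hN, Finset.sum_const, nsmul_eq_mul, mul_one, Nat.card_Icc]
      push_cast [Nat.cast_sub (show 1 ≤ N by omega)]
      ring
    · have hdvd : ¬ N ∣ j := by
        intro h
        have := Nat.le_of_dvd (by omega) h
        omega
      rw [aux_sum_pow hω hN hdvd, ih (by omega) (by omega)]
      push_cast
      ring

lemma aux_Sstep (hω : IsPrimitiveRoot ω N) (hN : 2 ≤ N) (k : ℕ) :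
    ∑ n ∈ Icc 1 (N - 1), ω ^ ((k + 1 + 1) * n) / (1 - ω ^ n) ^ 2
      = (∑ n ∈ Icc 1 (N - 1), ω ^ ((k + 1) * n) / (1 - ω ^ n) ^ 2)
        - ∑ n ∈ Icc 1 (N - 1), ω ^ ((k + 1) * n) / (1 - ω ^ n) := by
  rw [← Finset.sum_sub_distrib]
  apply Finset.sum_congr rfl
  intro n hn
  simp only [Finset.mem_Icc] at hn
  have h1 : (1 : ℂ) - ω ^ n ≠ 0 :=
    sub_ne_zero_of_ne (Ne.symm (aux_pow_ne_one hω hn.1 hn.2))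
  have he : (k + 1 + 1) * n = (k + 1) * n + n := by ring
  rw [he, pow_add]
  field_simp
  ring

lemma aux_Sval (hω : IsPrimitiveRoot ω N) (hN : 2 ≤ N) :
    ∀ k, k ≤ N - 1 →
    ∑ n ∈ Icc 1 (N - 1), ω ^ ((k + 1) * n) / (1 - ω ^ n) ^ 2
      = (∑ n ∈ Icc 1 (N - 1), ω ^ n / (1 - ω ^ n) ^ 2)
        - ((k : ℂ) * ((k : ℂ) - 1) / 2 - (k : ℂ) * (((N : ℂ) - 1) / 2)) := by
  intro k
  induction k with
  | zero =>
    intro _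
    simp only [Nat.zero_add, Nat.one_mul, Nat.cast_zero]
    ring
  | succ k ih =>
    intro hk
    rw [aux_Sstep hω hN k, aux_Tval hω hN (k + 1) (by omega) (by omega), ih (by omega)]
    push_cast
    ring

lemma aux_total (hω : IsPrimitiveRoot ω N) (hN : 2 ≤ N) :
    ∑ k ∈ range N, ∑ n ∈ Icc 1 (N - 1), ω ^ ((k + 1) * n) / (1 - ω ^ n) ^ 2 = 0 := by
  rw [Finset.sum_comm]
  apply Finset.sum_eq_zero
  intro n hn
  simp only [Finset.mem_Icc] at hn
  have hz1 : ω ^ n ≠ 1 := aux_pow_ne_one hω hn.1 hn.2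
  have hzN : (ω ^ n) ^ N = 1 := by
    rw [← pow_mul, mul_comm, pow_mul, hω.pow_eq_one, one_pow]
  have hg : ∑ k ∈ range N, (ω ^ n) ^ k = 0 := aux_geom hz1 hzN
  have hterm : ∀ k, ω ^ ((k + 1) * n) = ω ^ n * (ω ^ n) ^ k := by
    intro k
    rw [← pow_mul, ← pow_add]
    congr 1
    ring
  simp only [hterm]
  rw [← Finset.sum_div, ← Finset.mul_sum, hg, mul_zero, zero_div]

lemma aux_cube (c : ℂ) : ∀ M : ℕ,
    ∑ k ∈ range M, ((k : ℂ) * ((k : ℂ) - 1) / 2 - (k : ℂ) * c)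
      = (M : ℂ) * ((M : ℂ) - 1) * ((M : ℂ) - 2) / 6 - (M : ℂ) * ((M : ℂ) - 1) / 2 * c := by
  intro M
  induction M with
  | zero => simp
  | succ M ih =>
    rw [Finset.sum_range_succ, ih]
    push_cast
    ring

lemma aux_S0 (hω : IsPrimitiveRoot ω N) (hN : 2 ≤ N) :
    ∑ n ∈ Icc 1 (N - 1), ω ^ n / (1 - ω ^ n) ^ 2 = (1 - (N : ℂ) ^ 2) / 12 := by
  have hNne : (N : ℂ) ≠ 0 := Nat.cast_ne_zero.mpr (by omega)
  have htot := aux_total hω hN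
  have hval : ∀ k ∈ range N,
      ∑ n ∈ Icc 1 (N - 1), ω ^ ((k + 1) * n) / (1 - ω ^ n) ^ 2
        = (∑ n ∈ Icc 1 (N - 1), ω ^ n / (1 - ω ^ n) ^ 2)
          - ((k : ℂ) * ((k : ℂ) - 1) / 2 - (k : ℂ) * (((N : ℂ) - 1) / 2)) := by
    intro k hk
    simp only [Finset.mem_range] at hk
    exact aux_Sval hω hN k (by omega)
  rw [Finset.sum_congr rfl hval, Finset.sum_sub_distrib, Finset.sum_const,
    aux_cube (((N : ℂ) - 1) / 2) N, nsmul_eq_mul, Finset.card_range] at htot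
  apply mul_left_cancel₀ hNne
  rw [show (N : ℂ) * ((1 - (N : ℂ) ^ 2) / 12)
      = (N : ℂ) * ((N : ℂ) - 1) * ((N : ℂ) - 2) / 6
        - (N : ℂ) * ((N : ℂ) - 1) / 2 * (((N : ℂ) - 1) / 2) from by ring]
  linear_combination htot

end Aux

theorem omega_bernoulli_sum (N k : ℕ) (hN : 2 ≤ N) (hk : k ≤ N - 1) :
    ∑ n ∈ Finset.Icc 1 (N - 1),
      Complex.exp (2 * Real.pi * Complex.I / N) ^ ((k + 1) * n) /
        (1 - Complex.exp (2 * Real.pi * Complex.I / N) ^ n) ^ 2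
    = 1 / 12 - (N : ℂ) ^ 2 / 2 * (((k : ℂ) / N) ^ 2 - (k : ℂ) / N + 1 / 6) := by
  have hω : IsPrimitiveRoot (Complex.exp (2 * Real.pi * Complex.I / N)) N :=
    Complex.isPrimitiveRoot_exp N (by omega)
  have hNne : (N : ℂ) ≠ 0 := Nat.cast_ne_zero.mpr (by omega)
  rw [aux_Sval hω hN k hk, aux_S0 hω hN]
  linear_combination ((k : ℂ) ^ 2 / 2 * ((N : ℂ) * (N : ℂ)⁻¹ + 1) - (k : ℂ) * (N : ℂ) / 2)
    * (mul_inv_cancel₀ hNne)
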